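/- Let p, p' be probability mass functions on a finite set X with p(x), p'(x) > 0 for all x, let N be a positive integer and ε > 0. Then P_{D∼p^{⊗N}}( Σ_{i=1}^N [ −log(p(X_i)/p'(X_i)) ] + N·H²(p, p') ≥ ε ) ≤ exp(−ε/2), where D = (X_1,…,X_N). -/

import Mathlib

open scoped Classical

theorem chernoff_likelihood_hellinger
    {X : Type*} [Fintype X] (p p' : X → ℝ) (N : ℕ) (hN : 0 < N)
    (ε : ℝ) (hε : 0 < ε)
    (hp : ∀ x, 0 < p x) (hp' : ∀ x, 0 < p' x)
    (hp1 : ∑ x, p x = 1) (hp'1 : ∑ x, p' x = 1) :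
    ∑ D ∈ Finset.univ.filter (fun D : Fin N → X =>
        ε ≤ (∑ i, -Real.log (p (D i) / p' (D i)))
              + N * ∑ x, (Real.sqrt (p x) - Real.sqrt (p' x)) ^ 2),
      ∏ i, p (D i) ≤ Real.exp (-ε / 2) := by
  classical
  set B := ∑ x, Real.sqrt (p x * p' x) with hBdef
  have hBnonneg : 0 ≤ B := Finset.sum_nonneg fun x _ => Real.sqrt_nonneg _
  have hH2 : (∑ x, (Real.sqrt (p x) - Real.sqrt (p' x)) ^ 2) = 2 - 2 * B := by
    have h : ∀ x : X, (Real.sqrt (p x) - Real.sqrt (p' x)) ^ 2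
        = p x + p' x - 2 * Real.sqrt (p x * p' x) := by
      intro x
      rw [sub_sq, Real.sq_sqrt (hp x).le, Real.sq_sqrt (hp' x).le,
        Real.sqrt_mul (hp x).le]
      ring
    rw [Finset.sum_congr rfl fun x _ => h x]
    rw [Finset.sum_sub_distrib, Finset.sum_add_distrib, hp1, hp'1, ← Finset.mul_sum]
    ring
  have hprod : ∀ D : Fin N → X,
      Real.exp ((∑ i, -Real.log (p (D i) / p' (D i))) / 2) * ∏ i, p (D i)
        = ∏ i, Real.sqrt (p (D i) * p' (D i)) := by
    intro D
    rw [Finset.sum_div, Real.exp_sum, ← Finset.prod_mul_distrib]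
    refine Finset.prod_congr rfl fun i _ => ?_
    have h1 : 0 < p (D i) := hp _
    have h2 : 0 < p' (D i) := hp' _
    have hlog : -Real.log (p (D i) / p' (D i)) / 2
        = Real.log (Real.sqrt (p' (D i) / p (D i))) := by
      rw [Real.log_sqrt (by positivity), Real.log_div h2.ne' h1.ne',
        Real.log_div h1.ne' h2.ne']
      ring
    rw [hlog, Real.exp_log (Real.sqrt_pos.mpr (by positivity))]
    rw [show p (D i) * p' (D i) = (p' (D i) / p (D i)) * (p (D i)) ^ 2 by
      field_simp]
    rw [Real.sqrt_mul (by positivity), Real.sqrt_sq h1.le]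
  have hsum : ∑ D : Fin N → X, ∏ i, Real.sqrt (p (D i) * p' (D i)) = B ^ N := by
    rw [hBdef]
    rw [show ((∑ x, Real.sqrt (p x * p' x)) : ℝ) ^ N
        = ∏ _i : Fin N, ∑ x, Real.sqrt (p x * p' x) by
      rw [Finset.prod_const, Finset.card_univ, Fintype.card_fin]]
    rw [Finset.prod_univ_sum (fun _ : Fin N => (Finset.univ : Finset X))
      (fun _ x => Real.sqrt (p x * p' x))]
    rw [Fintype.piFinset_univ]
  have hBC : Real.exp ((N : ℝ) * (2 - 2 * B) / 2) * B ^ N ≤ 1 := by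
    have h1 : (N : ℝ) * (2 - 2 * B) / 2 = (N : ℝ) * (1 - B) := by ring
    rw [h1, Real.exp_nat_mul, ← mul_pow]
    have h2 : Real.exp (1 - B) * B ≤ 1 := by
      have h3 : B ≤ Real.exp (B - 1) := by
        have := Real.add_one_le_exp (B - 1)
        linarith
      calc Real.exp (1 - B) * B ≤ Real.exp (1 - B) * Real.exp (B - 1) :=
            mul_le_mul_of_nonneg_left h3 (Real.exp_pos _).le
        _ = 1 := by rw [← Real.exp_add]; norm_num
    calc (Real.exp (1 - B) * B) ^ N ≤ 1 ^ N := by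
          apply pow_le_pow_left₀ (by positivity) h2
      _ = 1 := one_pow N
  set E := Finset.univ.filter (fun D : Fin N → X =>
      ε ≤ (∑ i, -Real.log (p (D i) / p' (D i)))
            + N * ∑ x, (Real.sqrt (p x) - Real.sqrt (p' x)) ^ 2) with hE
  calc ∑ D ∈ E, ∏ i, p (D i)
      ≤ ∑ D ∈ E, Real.exp (-ε / 2) * (Real.exp ((N : ℝ) * (2 - 2 * B) / 2)
          * ∏ i, Real.sqrt (p (D i) * p' (D i))) := by
        apply Finset.sum_le_sum
        intro D hD
        rw [hE, Finset.mem_filter] at hD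
        have hε' := hD.2
        rw [hH2] at hε'
        have hpos : (0:ℝ) < ∏ i, p (D i) := Finset.prod_pos fun i _ => hp _
        rw [← hprod D, ← mul_assoc, ← mul_assoc, ← Real.exp_add, ← Real.exp_add]
        have hone : (1:ℝ) ≤ Real.exp (-ε / 2 + (N : ℝ) * (2 - 2 * B) / 2
            + (∑ i, -Real.log (p (D i) / p' (D i))) / 2) := by
          rw [Real.one_le_exp_iff]
          linarith
        calc ∏ i, p (D i) = 1 * ∏ i, p (D i) := (one_mul _).symm
          _ ≤ _ := mul_le_mul_of_nonneg_right hone hpos.le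
    _ ≤ ∑ D : Fin N → X, Real.exp (-ε / 2) * (Real.exp ((N : ℝ) * (2 - 2 * B) / 2)
          * ∏ i, Real.sqrt (p (D i) * p' (D i))) := by
        apply Finset.sum_le_sum_of_subset_of_nonneg (Finset.filter_subset _ _)
        intro D _ _
        positivity
    _ = Real.exp (-ε / 2) * (Real.exp ((N : ℝ) * (2 - 2 * B) / 2) * B ^ N) := by
        rw [← Finset.mul_sum, ← Finset.mul_sum, hsum]
    _ ≤ Real.exp (-ε / 2) * 1 := by
        apply mul_le_mul_of_nonneg_left hBC (Real.exp_pos _).le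
    _ = Real.exp (-ε / 2) := mul_one _
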